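/- Let n ≥ 1 and let S = {(k/n, k/n) : k = 0,1,…,n−1} ⊆ [0,1]². Let (r_k)_{k=0}^{n−1} be axis-aligned rectangles contained in [0,1]² such that r_k is anchored at (k/n, k/n), the interiors of the rectangles are pairwise disjoint, and the interior of no rectangle contains a point of S. Then the total area of the rectangles is at most 1/2 + 1/(2n). -/

import Mathlib

open MeasureTheory

/-- The unit square `[0,1]²` in the plane. -/
def unitSq : Set (ℝ × ℝ) := Set.Icc (0:ℝ) 1 ×ˢ Set.Icc (0:ℝ) 1

/-- The axis-aligned rectangle with lower-left corner `s` and upper-right corner `q`. -/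
def rectA (s q : ℝ × ℝ) : Set (ℝ × ℝ) := Set.Icc s.1 q.1 ×ˢ Set.Icc s.2 q.2

/-- The `k`-th equally spaced diagonal point `(k/n, k/n)`. -/
noncomputable def diagPt (n : ℕ) (k : Fin n) : ℝ × ℝ :=
  (((k : ℕ) : ℝ) / n, ((k : ℕ) : ℝ) / n)

theorem stmt15 (n : ℕ) (hn : 1 ≤ n) (q : Fin n → ℝ × ℝ)
    (hanch : ∀ k : Fin n, (diagPt n k).1 ≤ (q k).1 ∧ (diagPt n k).2 ≤ (q k).2)
    (hsub : ∀ k : Fin n, rectA (diagPt n k) (q k) ⊆ unitSq)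
    (hdisj : ∀ k l : Fin n, k ≠ l →
      Disjoint (interior (rectA (diagPt n k) (q k)))
        (interior (rectA (diagPt n l) (q l))))
    (hempty : ∀ k l : Fin n, diagPt n l ∉ interior (rectA (diagPt n k) (q k))) :
    ∑ k : Fin n, ((q k).1 - (diagPt n k).1) * ((q k).2 - (diagPt n k).2) ≤
      1 / 2 + 1 / (2 * n) := by
  have hn0 : (0:ℝ) < n := by exact_mod_cast hn
  have key : ∀ k : Fin n,
      ((q k).1 - (diagPt n k).1) * ((q k).2 - (diagPt n k).2) ≤
        (1/n) * (1 - ((k:ℕ):ℝ)/n) := by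
    intro k
    simp only [diagPt] at *
    have hax : ((k:ℕ):ℝ)/n ≤ (q k).1 := (hanch k).1
    have hay : ((k:ℕ):ℝ)/n ≤ (q k).2 := (hanch k).2
    have hqmem : q k ∈ rectA (((k:ℕ):ℝ)/n, ((k:ℕ):ℝ)/n) (q k) := by
      simp only [rectA, Set.mem_prod, Set.mem_Icc]
      exact ⟨⟨hax, le_rfl⟩, hay, le_rfl⟩
    have hq := hsub k hqmem
    simp only [unitSq, Set.mem_prod, Set.mem_Icc] at hq
    obtain ⟨⟨_, hx1⟩, _, hy1⟩ := hq
    have hb : (q k).1 ≤ (((k:ℕ):ℝ)+1)/n ∨ (q k).2 ≤ (((k:ℕ):ℝ)+1)/n := by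
      by_cases hk : (k:ℕ)+1 < n
      · have h := hempty k ⟨(k:ℕ)+1, hk⟩
        rw [rectA, interior_prod_eq, interior_Icc, interior_Icc] at h
        simp only [diagPt, Set.mem_prod, Set.mem_Ioo] at h
        push_cast at h
        have halt : ((k:ℕ):ℝ)/n < (((k:ℕ):ℝ)+1)/n := by
          gcongr
          linarith
        by_contra hc
        push_neg at hc
        exact h ⟨⟨halt, hc.1⟩, halt, hc.2⟩
      · left
        have hkn : (n:ℝ) ≤ ((k:ℕ):ℝ)+1 := by
          push_neg at hk; exact_mod_cast hk
        have : (1:ℝ) ≤ (((k:ℕ):ℝ)+1)/n := by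
          rw [le_div_iff₀ hn0]; linarith
        linarith
    have hdiff : (((k:ℕ):ℝ)+1)/n - ((k:ℕ):ℝ)/n = 1/n := by
      field_simp; ring
    rcases hb with hb | hb
    · have := mul_le_mul (by linarith : (q k).1 - ((k:ℕ):ℝ)/n ≤ 1/n)
        (by linarith : (q k).2 - ((k:ℕ):ℝ)/n ≤ 1 - ((k:ℕ):ℝ)/n)
        (by linarith) (by positivity)
      linarith
    · have := mul_le_mul (by linarith : (q k).2 - ((k:ℕ):ℝ)/n ≤ 1/n)
        (by linarith : (q k).1 - ((k:ℕ):ℝ)/n ≤ 1 - ((k:ℕ):ℝ)/n)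
        (by linarith) (by positivity)
      nlinarith [this]
  calc ∑ k : Fin n, ((q k).1 - (diagPt n k).1) * ((q k).2 - (diagPt n k).2)
      ≤ ∑ k : Fin n, (1/n) * (1 - ((k:ℕ):ℝ)/n) :=
        Finset.sum_le_sum fun k _ => key k
    _ = 1 / 2 + 1 / (2 * n) := by
        rw [Fin.sum_univ_eq_sum_range (fun i => (1/(n:ℝ)) * (1 - (i:ℝ)/n)) n]
        have hs : ∑ i ∈ Finset.range n, ((i:ℝ)) = n*(n-1)/2 := by
          have h := Finset.sum_range_id_mul_two n
          have h2 : ((∑ i ∈ Finset.range n, i : ℕ):ℝ) * 2 = (n:ℝ) * ((n:ℝ) - 1) := by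
            rw [← Nat.cast_ofNat, ← Nat.cast_mul, h]
            push_cast [Nat.cast_sub hn]
            ring
          push_cast at h2 ⊢
          linarith
        have expand : ∑ i ∈ Finset.range n, (1/(n:ℝ)) * (1 - (i:ℝ)/n)
            = (n:ℝ) * (1/n) - (∑ i ∈ Finset.range n, ((i:ℝ))) / n^2 := by
          have hcong : ∀ i ∈ Finset.range n, (1/(n:ℝ)) * (1 - (i:ℝ)/n)
              = 1/n - (i:ℝ)/n^2 := by
            intro i _
            field_simp
          rw [Finset.sum_congr rfl hcong, Finset.sum_sub_distrib, Finset.sum_const,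
            Finset.card_range, nsmul_eq_mul, ← Finset.sum_div]
        rw [expand, hs]
        field_simp
        ring
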